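/- Let (e_n) be an orthonormal basis of a separable Hilbert space H, and let (φ_n) be a sequence in H that is ω-linearly independent and satisfies Σ_n ‖φ_n − e_n‖² < ∞. Then (φ_n) is a Riesz basis of H; in particular there exist constants 0 < m ≤ M such that m Σ|a_n|² ≤ ‖Σ a_n φ_n‖² ≤ M Σ|a_n|² for all finitely supported scalar sequences (a_n). -/

import Mathlib

noncomputable section
open scoped ComplexConjugate

local notation "⟪" x ", " y "⟫" => @inner ℂ _ _ x y

variable {H : Type*} [NormedAddCommGroup H] [InnerProductSpace ℂ H] [CompleteSpace H]

/-- Cauchy–Schwarz for tsums. -/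
lemma bari_tsum_cs {a b : ℕ → ℝ} (ha : ∀ n, 0 ≤ a n) (hb : ∀ n, 0 ≤ b n)
    (ha2 : Summable fun n => a n ^ 2) (hb2 : Summable fun n => b n ^ 2) :
    ∑' n, a n * b n ≤ Real.sqrt (∑' n, a n ^ 2) * Real.sqrt (∑' n, b n ^ 2) := by
  have hsum : Summable fun n => a n * b n := by
    apply Summable.of_nonneg_of_le (fun n => mul_nonneg (ha n) (hb n))
      (fun n => ?_) ((ha2.add hb2).div_const 2)
    nlinarith [sq_nonneg (a n - b n)]
  refine Summable.tsum_le_of_sum_le hsum fun s => ?_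
  have h1 : (∑ n ∈ s, a n * b n) ^ 2 ≤ (∑ n ∈ s, a n ^ 2) * ∑ n ∈ s, b n ^ 2 :=
    Finset.sum_mul_sq_le_sq_mul_sq s a b
  have h2 : (∑ n ∈ s, a n ^ 2) ≤ ∑' n, a n ^ 2 :=
    Summable.sum_le_tsum s (fun n _ => sq_nonneg _) ha2
  have h3 : (∑ n ∈ s, b n ^ 2) ≤ ∑' n, b n ^ 2 :=
    Summable.sum_le_tsum s (fun n _ => sq_nonneg _) hb2
  have h4 : (∑ n ∈ s, a n * b n) ^ 2 ≤ (∑' n, a n ^ 2) * ∑' n, b n ^ 2 := by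
    refine h1.trans (mul_le_mul h2 h3 ?_ ?_)
    · exact Finset.sum_nonneg fun n _ => sq_nonneg _
    · exact tsum_nonneg fun n => sq_nonneg _
  have hS : 0 ≤ ∑ n ∈ s, a n * b n :=
    Finset.sum_nonneg fun n _ => mul_nonneg (ha n) (hb n)
  have := (Real.le_sqrt hS (mul_nonneg (tsum_nonneg fun n => sq_nonneg (a n))
    (tsum_nonneg fun n => sq_nonneg (b n)))).mpr h4
  rwa [Real.sqrt_mul (tsum_nonneg fun n => sq_nonneg (a n))] at this

/-- Parseval: the squared coefficients sum to the squared norm. -/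
lemma bari_parseval (e : HilbertBasis ℕ ℂ H) (x : H) :
    HasSum (fun n => ‖(e.repr x n : ℂ)‖ ^ 2) (‖x‖ ^ 2) := by
  have h := e.hasSum_inner_mul_inner x x
  have h2 : ∀ n, ⟪x, e n⟫ * ⟪e n, x⟫ = ((‖(e.repr x n : ℂ)‖ ^ 2 : ℝ) : ℂ) := by
    intro n
    rw [← e.repr_apply_apply, ← inner_conj_symm x (e n), ← e.repr_apply_apply]
    generalize (e.repr x n : ℂ) = z
    rw [Complex.sq_norm, Complex.normSq_eq_conj_mul_self]
  rw [@inner_self_eq_norm_sq_to_K ℂ] at h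
  simp_rw [h2] at h
  have h3 := h.mapL Complex.reCLM
  simpa [← Complex.ofReal_pow, Complex.ofReal_re] using h3

lemma bari_summable_norm (e : HilbertBasis ℕ ℂ H) (x : H) (g : ℕ → H)
    (hg : Summable fun n => ‖g n‖ ^ 2) :
    Summable (fun n => ‖(e.repr x n : ℂ) • g n‖) := by
  have h1 : Summable fun n => ‖(e.repr x n : ℂ)‖ ^ 2 := (bari_parseval e x).summable
  apply Summable.of_nonneg_of_le (fun n => norm_nonneg _) (fun n => ?_)
    ((h1.add hg).div_const 2)
  rw [norm_smul]
  nlinarith [sq_nonneg (‖(e.repr x n : ℂ)‖ - ‖g n‖), norm_nonneg (e.repr x n : ℂ),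
    norm_nonneg (g n)]

lemma bari_summable (e : HilbertBasis ℕ ℂ H) (x : H) (g : ℕ → H)
    (hg : Summable fun n => ‖g n‖ ^ 2) :
    Summable (fun n => (e.repr x n : ℂ) • g n) :=
  (bari_summable_norm e x g hg).of_norm

/-- The auxiliary operator `x ↦ ∑ ⟪eₙ, x⟫ gₙ`. -/
def bariOp (e : HilbertBasis ℕ ℂ H) (g : ℕ → H)
    (hg : Summable fun n => ‖g n‖ ^ 2) : H →L[ℂ] H :=
  LinearMap.mkContinuous
    { toFun := fun x => ∑' n, (e.repr x n : ℂ) • g n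
      map_add' := by
        intro x y
        have h : ∀ n, (e.repr (x + y) n : ℂ) • g n
            = (e.repr x n : ℂ) • g n + (e.repr y n : ℂ) • g n := by
          intro n
          rw [map_add]
          simp [add_smul]
        show ∑' n, (e.repr (x + y) n : ℂ) • g n = _
        rw [tsum_congr h, Summable.tsum_add (bari_summable e x g hg) (bari_summable e y g hg)]
      map_smul' := by
        intro c x
        have h : ∀ n, (e.repr (c • x) n : ℂ) • g n = c • ((e.repr x n : ℂ) • g n) := by
          intro n
          rw [map_smul]
          simp [smul_smul]
        show ∑' n, (e.repr (c • x) n : ℂ) • g n = _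
        rw [tsum_congr h, Summable.tsum_const_smul c (bari_summable e x g hg)]
        rfl }
    (Real.sqrt (∑' n, ‖g n‖ ^ 2))
    (by
      intro x
      simp only [LinearMap.coe_mk, AddHom.coe_mk]
      have hsum := bari_summable_norm e x g hg
      refine (norm_tsum_le_tsum_norm hsum).trans ?_
      have h2 : ∀ n, ‖(e.repr x n : ℂ) • g n‖ = ‖(e.repr x n : ℂ)‖ * ‖g n‖ :=
        fun n => norm_smul _ _
      rw [tsum_congr h2]
      have hcs := bari_tsum_cs (a := fun n => ‖(e.repr x n : ℂ)‖) (b := fun n => ‖g n‖)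
        (fun n => norm_nonneg _) (fun n => norm_nonneg _) (bari_parseval e x).summable hg
      refine hcs.trans ?_
      rw [(bari_parseval e x).tsum_eq, Real.sqrt_sq (norm_nonneg x), mul_comm])

lemma bariOp_hasSum (e : HilbertBasis ℕ ℂ H) (g : ℕ → H)
    (hg : Summable fun n => ‖g n‖ ^ 2) (x : H) :
    HasSum (fun n => (e.repr x n : ℂ) • g n) (bariOp e g hg x) :=
  (bari_summable e x g hg).hasSum

lemma bariOp_apply_basis (e : HilbertBasis ℕ ℂ H) (g : ℕ → H)
    (hg : Summable fun n => ‖g n‖ ^ 2) (m : ℕ) :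
    bariOp e g hg (e m) = g m := by
  classical
  have h0 : bariOp e g hg (e m) = ∑' n, (e.repr (e m) n : ℂ) • g n := rfl
  rw [h0, tsum_eq_single m]
  · rw [e.repr_self]
    simp [lp.single_apply]
  · intro n hn
    rw [e.repr_self]
    rw [lp.single_apply]
    rw [Pi.single_apply, if_neg hn]
    simp

lemma bariOp_norm_le (e : HilbertBasis ℕ ℂ H) (g : ℕ → H)
    (hg : Summable fun n => ‖g n‖ ^ 2) :
    ‖bariOp e g hg‖ ≤ Real.sqrt (∑' n, ‖g n‖ ^ 2) :=
  LinearMap.mkContinuous_norm_le _ (Real.sqrt_nonneg _) _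

/-- `1 + G` with `G` of finite rank: injective implies bijective. -/
lemma bari_oneAdd_finiteRank_bijective (G : H →L[ℂ] H) (V : Submodule ℂ H)
    [FiniteDimensional ℂ V] (hGV : ∀ x, G x ∈ V)
    (hinj : Function.Injective fun x => x + G x) :
    Function.Bijective fun x => x + G x := by
  refine ⟨hinj, ?_⟩
  -- the restriction of `1 + G` to `V`
  let f : H →ₗ[ℂ] H := LinearMap.id + (G : H →ₗ[ℂ] H)
  have hf : ∀ x ∈ V, f x ∈ V := fun x hx => V.add_mem hx (hGV x)
  let A : V →ₗ[ℂ] V := f.restrict hf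
  have hAinj : Function.Injective A := by
    intro v w hvw
    have : f (v : H) = f (w : H) := congrArg Subtype.val hvw
    have h2 : (v : H) + G v = (w : H) + G w := this
    exact Subtype.ext (hinj h2)
  have hAsurj : Function.Surjective A := (LinearMap.injective_iff_surjective).mp hAinj
  intro y
  obtain ⟨v, hv⟩ := hAsurj ⟨-G y, V.neg_mem (hGV y)⟩
  refine ⟨y + (v : H), ?_⟩
  have hv' : (v : H) + G v = -G y := congrArg Subtype.val hv
  show y + (v : H) + G (y + (v : H)) = y
  rw [map_add]
  have : (v : H) + (G y + G v) = 0 := by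
    rw [add_comm (G y) (G v), ← add_assoc, hv', neg_add_cancel]
  linear_combination (norm := abel) this

end

set_option maxHeartbeats 1600000 in
/-- Bari's theorem: a sequence that is ω-linearly independent and quadratically
close to an orthonormal basis is a Riesz basis. -/
theorem stmt_13 (H : Type*) [NormedAddCommGroup H] [InnerProductSpace ℂ H]
    [CompleteSpace H]
    (e : HilbertBasis ℕ ℂ H) (φ : ℕ → H)
    (hindep : ∀ a : ℕ → ℂ, HasSum (fun n => a n • φ n) 0 → a = 0)
    (hquad : Summable (fun n => ‖φ n - e n‖ ^ 2)) :
    (∃ T : H ≃L[ℂ] H, ∀ n, T (e n) = φ n) ∧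
    ∃ m M : ℝ, 0 < m ∧ m ≤ M ∧
      ∀ (s : Finset ℕ) (a : ℕ → ℂ),
        m * ∑ n ∈ s, ‖a n‖ ^ 2 ≤ ‖∑ n ∈ s, a n • φ n‖ ^ 2 ∧
        ‖∑ n ∈ s, a n • φ n‖ ^ 2 ≤ M * ∑ n ∈ s, ‖a n‖ ^ 2 := by
  classical
  set d : ℕ → H := fun n => φ n - e n with hd_def
  have hd : Summable fun n => ‖d n‖ ^ 2 := hquad
  -- choose a tail with small ℓ² norm
  obtain ⟨N, hN⟩ : ∃ N, ∑' k, ‖d (k + N)‖ ^ 2 < 1 := by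
    have htail := tendsto_sum_nat_add (f := fun n => ‖d n‖ ^ 2)
    exact (htail.eventually_lt_const (by norm_num : (0:ℝ) < 1)).exists
  set d' : ℕ → H := fun n => if n < N then 0 else d n with hd'_def
  have hle : ∀ n, ‖d' n‖ ^ 2 ≤ ‖d n‖ ^ 2 := by
    intro n
    by_cases h : n < N <;> simp [d', h, sq_nonneg]
  have hd' : Summable fun n => ‖d' n‖ ^ 2 :=
    Summable.of_nonneg_of_le (fun n => sq_nonneg _) hle hd
  have hd'sum : ∑' n, ‖d' n‖ ^ 2 < 1 := by
    have hsplit := Summable.sum_add_tsum_nat_add (f := fun n => ‖d' n‖ ^ 2) N hd'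
    have h0 : ∀ i ∈ Finset.range N, ‖d' i‖ ^ 2 = 0 := by
      intro i hi
      simp [d', Finset.mem_range.mp hi]
    have heq : ∀ i : ℕ, ‖d' (i + N)‖ ^ 2 = ‖d (i + N)‖ ^ 2 := by
      intro i
      simp [d', Nat.not_lt.mpr (Nat.le_add_left N i)]
    rw [Finset.sum_eq_zero h0, zero_add, tsum_congr heq] at hsplit
    rw [← hsplit]
    exact hN
  -- the operators
  set K : H →L[ℂ] H := bariOp e d hd with hK_def
  set K' : H →L[ℂ] H := bariOp e d' hd' with hK'_def
  have hK'norm : ‖K'‖ < 1 := by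
    refine lt_of_le_of_lt (bariOp_norm_le e d' hd') ?_
    rw [show (1:ℝ) = Real.sqrt 1 by simp]
    exact Real.sqrt_lt_sqrt (tsum_nonneg fun n => sq_nonneg _) hd'sum |>.trans_eq (by simp)
  set u : (H →L[ℂ] H)ˣ := Units.oneSub (-K') (by rwa [norm_neg]) with hu_def
  have hu : (u : H →L[ℂ] H) = 1 + K' := by
    rw [hu_def, Units.val_oneSub, sub_neg_eq_add]
  set F : H →L[ℂ] H := K - K' with hF_def
  set T : H →L[ℂ] H := 1 + K with hT_def
  have hTu : T = (u : H →L[ℂ] H) * (1 + ((u⁻¹ : (H →L[ℂ] H)ˣ) : H →L[ℂ] H) * F) := by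
    rw [mul_add, mul_one, ← mul_assoc, Units.mul_inv, one_mul, hu, hF_def, hT_def]
    abel
  set G : H →L[ℂ] H := ((u⁻¹ : (H →L[ℂ] H)ˣ) : H →L[ℂ] H) * F with hG_def
  -- F has finite rank
  set V : Submodule ℂ H := Submodule.span ℂ (d '' Set.Iio N) with hV_def
  haveI : FiniteDimensional ℂ V :=
    FiniteDimensional.span_of_finite ℂ ((Set.finite_Iio N).image d)
  have hFV : ∀ x, F x ∈ V := by
    intro x
    have h1 := bariOp_hasSum e d hd x
    have h2 := bariOp_hasSum e d' hd' x
    have h3 := h1.sub h2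
    have hterm : ∀ n, (e.repr x n : ℂ) • d n - (e.repr x n : ℂ) • d' n
        = if n < N then (e.repr x n : ℂ) • d n else 0 := by
      intro n
      by_cases h : n < N <;> simp [d', h]
    simp_rw [hterm] at h3
    have h4 : HasSum (fun n => if n < N then (e.repr x n : ℂ) • d n else 0)
        (∑ n ∈ Finset.range N, if n < N then (e.repr x n : ℂ) • d n else 0) := by
      apply hasSum_sum_of_ne_finset_zero
      intro n hn
      rw [if_neg (fun h => hn (Finset.mem_range.mpr h))]
    have h5 : F x = ∑ n ∈ Finset.range N, if n < N then (e.repr x n : ℂ) • d n else 0 := by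
      have : F x = K x - K' x := rfl
      rw [this, h3.unique h4]
    rw [h5]
    apply Submodule.sum_mem
    intro n hn
    rw [if_pos (Finset.mem_range.mp hn)]
    exact V.smul_mem _ (Submodule.subset_span ⟨n, Finset.mem_range.mp hn, rfl⟩)
  -- G has finite rank
  set V' : Submodule ℂ H :=
    V.map (((u⁻¹ : (H →L[ℂ] H)ˣ) : H →L[ℂ] H) : H →ₗ[ℂ] H) with hV'_def
  haveI : FiniteDimensional ℂ V' := Module.Finite.map V _
  have hGV : ∀ x, G x ∈ V' := by
    intro x
    exact ⟨F x, hFV x, rfl⟩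
  -- T is injective
  have hTinj : Function.Injective T := by
    have hker : ∀ x, T x = 0 → x = 0 := by
      intro x hx
      have h1 : HasSum (fun n => (e.repr x n : ℂ) • e n) x := e.hasSum_repr x
      have h2 := bariOp_hasSum e d hd x
      have h3 : HasSum (fun n => (e.repr x n : ℂ) • φ n) 0 := by
        have h4 := h1.add h2
        have hterm : ∀ n, (e.repr x n : ℂ) • e n + (e.repr x n : ℂ) • d n
            = (e.repr x n : ℂ) • φ n := by
          intro n
          rw [← smul_add]
          congr 1
          simp [d]
        simp_rw [hterm] at h4
        have hx0 : x + K x = 0 := by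
          have : T x = x + K x := by simp [hT_def]
          rwa [this] at hx
        rwa [hx0] at h4
      have h5 := hindep _ h3
      have h6 : ∀ n, (e.repr x n : ℂ) = 0 := fun n => congrFun h5 n
      have h7 := e.hasSum_repr x
      simp_rw [h6, zero_smul] at h7
      exact h7.unique hasSum_zero
    intro a b hab
    have h : T (a - b) = 0 := by rw [map_sub, hab, sub_self]
    have := hker _ h
    rwa [sub_eq_zero] at this
  -- (1 + G) is injective, hence bijective
  have hGinj : Function.Injective fun x => x + G x := by
    intro a b hab
    apply hTinj
    rw [hTu]
    have h1 : ((1 : H →L[ℂ] H) + G) a = ((1 : H →L[ℂ] H) + G) b := by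
      simpa using hab
    simp only [ContinuousLinearMap.mul_apply]
    rw [h1]
  have hGbij := bari_oneAdd_finiteRank_bijective G V' hGV hGinj
  -- T is bijective
  have hTbij : Function.Bijective T := by
    have hcoe : ⇑T = ⇑((u : H →L[ℂ] H)) ∘ fun x => x + G x := by
      funext x
      rw [hTu]
      simp [ContinuousLinearMap.mul_apply]
    rw [hcoe]
    refine Function.Bijective.comp ?_ hGbij
    constructor
    · intro a b hab
      have := congrArg (((u⁻¹ : (H →L[ℂ] H)ˣ) : H →L[ℂ] H)) hab
      simpa [← ContinuousLinearMap.mul_apply, Units.inv_mul] using this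
    · intro y
      refine ⟨((u⁻¹ : (H →L[ℂ] H)ˣ) : H →L[ℂ] H) y, ?_⟩
      simp [← ContinuousLinearMap.mul_apply, Units.mul_inv]
  -- the equivalence
  set Teq : H ≃L[ℂ] H := ContinuousLinearEquiv.ofBijective T
    (LinearMap.ker_eq_bot.mpr hTbij.injective)
    (LinearMap.range_eq_top.mpr hTbij.surjective) with hTeq_def
  have hTeq_apply : ∀ x, Teq x = T x := fun x =>
    congrFun (ContinuousLinearEquiv.coeFn_ofBijective T _ _) x
  have hTbasis : ∀ n, Teq (e n) = φ n := by
    intro n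
    rw [hTeq_apply]
    have : T (e n) = e n + K (e n) := by simp [hT_def]
    rw [this, hK_def, bariOp_apply_basis]
    simp [d]
  refine ⟨⟨Teq, hTbasis⟩, ?_⟩
  -- the frame bounds
  set B : ℝ := ‖(Teq.symm : H →L[ℂ] H)‖ with hB_def
  have hB0 : (0:ℝ) < 1 + B := by positivity
  set CT : ℝ := ‖T‖ with hCT_def
  have hCT0 : (0:ℝ) < 1 + CT := by positivity
  refine ⟨min (((1 + B)⁻¹) ^ 2) ((1 + CT) ^ 2), (1 + CT) ^ 2, ?_, min_le_right _ _, ?_⟩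
  · apply lt_min
    · positivity
    · positivity
  intro s a
  set y : H := ∑ n ∈ s, a n • e n with hy_def
  have hTy : T y = ∑ n ∈ s, a n • φ n := by
    rw [hy_def, map_sum]
    refine Finset.sum_congr rfl fun n _ => ?_
    rw [map_smul]
    congr 1
    have := hTbasis n
    rwa [hTeq_apply] at this
  have hynorm : ‖y‖ ^ 2 = ∑ n ∈ s, ‖a n‖ ^ 2 := by
    have h1 : (inner ℂ y y : ℂ) = ∑ n ∈ s, (starRingEnd ℂ) (a n) * a n :=
      e.orthonormal.inner_sum a a s
    have h2 : ∀ n, (starRingEnd ℂ) (a n) * a n = ((‖a n‖ ^ 2 : ℝ) : ℂ) := by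
      intro n
      rw [Complex.sq_norm, Complex.normSq_eq_conj_mul_self]
    rw [@inner_self_eq_norm_sq_to_K ℂ] at h1
    simp_rw [h2] at h1
    rw [← Complex.ofReal_sum] at h1
    simpa [← Complex.ofReal_pow] using congrArg Complex.re h1
  have hupper : ‖∑ n ∈ s, a n • φ n‖ ^ 2 ≤ (1 + CT) ^ 2 * ∑ n ∈ s, ‖a n‖ ^ 2 := by
    rw [← hTy, ← hynorm]
    have h1 : ‖T y‖ ≤ (1 + CT) * ‖y‖ := by
      refine (T.le_opNorm y).trans ?_
      have : CT * ‖y‖ ≤ (1 + CT) * ‖y‖ := by nlinarith [norm_nonneg y]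
      exact this
    nlinarith [norm_nonneg (T y), norm_nonneg y]
  have hlower : min (((1 + B)⁻¹) ^ 2) ((1 + CT) ^ 2) * ∑ n ∈ s, ‖a n‖ ^ 2
      ≤ ‖∑ n ∈ s, a n • φ n‖ ^ 2 := by
    rw [← hTy, ← hynorm]
    have h1 : ‖y‖ ≤ (1 + B) * ‖T y‖ := by
      have h2 : Teq.symm (T y) = y := by
        rw [← hTeq_apply]
        exact Teq.symm_apply_apply y
      calc ‖y‖ = ‖Teq.symm (T y)‖ := by rw [h2]
        _ ≤ B * ‖T y‖ := (Teq.symm : H →L[ℂ] H).le_opNorm (T y)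
        _ ≤ (1 + B) * ‖T y‖ := by nlinarith [norm_nonneg (T y)]
    have h3 : ‖y‖ ^ 2 ≤ (1 + B) ^ 2 * ‖T y‖ ^ 2 := by
      nlinarith [norm_nonneg y, norm_nonneg (T y)]
    have h4 : min (((1 + B)⁻¹) ^ 2) ((1 + CT) ^ 2) ≤ ((1 + B)⁻¹) ^ 2 := min_le_left _ _
    have h5 : ((1 + B)⁻¹) ^ 2 * ‖y‖ ^ 2 ≤ ‖T y‖ ^ 2 := by
      rw [inv_pow]
      rw [inv_mul_le_iff₀ (by positivity)]
      linarith [h3]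
    calc min (((1 + B)⁻¹) ^ 2) ((1 + CT) ^ 2) * ‖y‖ ^ 2
        ≤ ((1 + B)⁻¹) ^ 2 * ‖y‖ ^ 2 := by
          apply mul_le_mul_of_nonneg_right h4
          positivity
      _ ≤ ‖T y‖ ^ 2 := h5
  exact ⟨hlower, hupper⟩
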